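/- Let (x^k), (y^k) be a DCA sequence for minimizing f = g − h over C with x^0 ∈ C. Then the sequence (f(x^k)) is non-increasing, i.e., f(x^{k+1}) ≤ f(x^k) for every k ≥ 0; consequently, if f is bounded below on C, then the sequence (f(x^k)) converges. -/
import Mathlib


open scoped RealInnerProductSpace
open Filter Topology

/-- monotonicity and (under lower boundedness) convergence of `f(xᵏ)`
for a DCA sequence minimizing `f = g - h` over `C`. -/
theorem stmt_0
    {E : Type*} [NormedAddCommGroup E] [InnerProductSpace ℝ E] [FiniteDimensional ℝ E]
    (C : Set E) (hCne : C.Nonempty) (hCclosed : IsClosed C) (hCconv : Convex ℝ C)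
    (g h : E → ℝ) (hg : ConvexOn ℝ Set.univ g) (hh : ConvexOn ℝ Set.univ h)
    (f : E → ℝ) (hf : ∀ z, f z = g z - h z)
    (x y : ℕ → E)
    (hx0 : x 0 ∈ C)
    (hsub : ∀ k, ∀ z, h z ≥ h (x k) + ⟪y k, z - x k⟫)
    (hxC : ∀ k, x (k + 1) ∈ C)
    (hmin : ∀ k, ∀ z ∈ C, g (x (k + 1)) - ⟪y k, x (k + 1)⟫ ≤ g z - ⟪y k, z⟫) :
    (∀ k, f (x (k + 1)) ≤ f (x k)) ∧
      (BddBelow (f '' C) → ∃ l, Tendsto (fun k => f (x k)) atTop (𝓝 l)) := by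
  have hxCall : ∀ k, x k ∈ C := by
    intro k; cases k with
    | zero => exact hx0
    | succ n => exact hxC n
  have hmono : ∀ k, f (x (k + 1)) ≤ f (x k) := by
    intro k
    have h1 := hsub k (x (k + 1))
    have h2 := hmin k (x k) (hxCall k)
    rw [hf, hf]
    have hinner : ⟪y k, x (k + 1) - x k⟫ = ⟪y k, x (k + 1)⟫ - ⟪y k, x k⟫ :=
      inner_sub_right _ _ _
    rw [hinner] at h1
    linarith
  refine ⟨hmono, fun hbdd => ?_⟩
  have hant : Antitone fun k => f (x k) := antitone_nat_of_succ_le hmono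
  obtain ⟨m, hm⟩ := hbdd
  have hb : BddBelow (Set.range fun k => f (x k)) := by
    refine ⟨m, ?_⟩
    rintro _ ⟨k, rfl⟩
    exact hm ⟨x k, hxCall k, rfl⟩
  exact ⟨_, tendsto_atTop_ciInf hant hb⟩
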